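/- (Fractional Gronwall inequality) Let a, M > 0 and T > 0. If g : [0,T] → ℝ is nonnegative and continuous, f : [0,T] → ℝ is nonnegative, and g(t) ≤ f(t) + M·∫_0^t (t-s)^{a-1} g(s) ds for all t ∈ [0,T], and f is nondecreasing, then g(t) ≤ f(t)·E_a(Γ(a)·M·t^a) for all t ∈ [0,T], where E_a(z) = ∑_{j≥0} z^j/Γ(ja+1) is the Mittag-Leffler function. -/

import Mathlib

open MeasureTheory

private lemma beta_aux {a b t : ℝ} (ha : 0 < a) (hb : 0 ≤ b) (ht : 0 < t) :
    ∫ s in (0:ℝ)..t, (t - s) ^ (a - 1) * s ^ b =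
      Real.Gamma a * Real.Gamma (b + 1) / Real.Gamma (a + b + 1) * t ^ (a + b) := by
  have hGpos : 0 < Real.Gamma (a + b + 1) := Real.Gamma_pos_of_pos (by linarith)
  have key := Complex.betaIntegral_scaled ((b : ℂ) + 1) (a : ℂ) ht
  have hGam := Complex.Gamma_mul_Gamma_eq_betaIntegral
      (s := (b : ℂ) + 1) (t := (a : ℂ)) (by simp; linarith) (by simpa using ha)
  have hL : (∫ x in (0:ℝ)..t, (x : ℂ) ^ ((b : ℂ) + 1 - 1) * ((t : ℂ) - (x : ℝ)) ^ ((a : ℂ) - 1))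
      = ((∫ s in (0:ℝ)..t, (t - s) ^ (a - 1) * s ^ b : ℝ) : ℂ) := by
    rw [← intervalIntegral.integral_ofReal, intervalIntegral.integral_of_le ht.le,
      intervalIntegral.integral_of_le ht.le]
    refine setIntegral_congr_fun measurableSet_Ioc fun x hx => ?_
    have hx0 : (0:ℝ) ≤ x := hx.1.le
    have hxt : (0:ℝ) ≤ t - x := sub_nonneg.2 hx.2
    rw [add_sub_cancel_right,
      show ((t : ℂ) - (x : ℝ)) = ((t - x : ℝ) : ℂ) by push_cast; ring,
      ← Complex.ofReal_cpow hx0,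
      show ((a : ℂ) - 1) = ((a - 1 : ℝ) : ℂ) by push_cast; ring,
      ← Complex.ofReal_cpow hxt]
    push_cast
    ring
  have hR : ((t : ℂ)) ^ ((b : ℂ) + 1 + (a : ℂ) - 1) = ((t ^ (a + b) : ℝ) : ℂ) := by
    rw [show ((b : ℂ) + 1 + (a : ℂ) - 1) = ((a + b : ℝ) : ℂ) by push_cast; ring,
      ← Complex.ofReal_cpow ht.le]
  have hGne : (Complex.Gamma ((b : ℂ) + 1 + (a : ℂ))) ≠ 0 := by
    rw [show ((b : ℂ) + 1 + (a : ℂ)) = ((a + b + 1 : ℝ) : ℂ) by push_cast; ring,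
      Complex.Gamma_ofReal]
    exact_mod_cast hGpos.ne'
  have hbeta : Complex.betaIntegral ((b : ℂ) + 1) (a : ℂ)
      = ((Real.Gamma a * Real.Gamma (b + 1) / Real.Gamma (a + b + 1) : ℝ) : ℂ) := by
    have h1 : Complex.Gamma ((b : ℂ) + 1) = ((Real.Gamma (b + 1) : ℝ) : ℂ) := by
      rw [show ((b : ℂ) + 1) = ((b + 1 : ℝ) : ℂ) by push_cast; ring, Complex.Gamma_ofReal]
    have h2 : Complex.Gamma ((b : ℂ) + 1 + (a : ℂ)) = ((Real.Gamma (a + b + 1) : ℝ) : ℂ) := by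
      rw [show ((b : ℂ) + 1 + (a : ℂ)) = ((a + b + 1 : ℝ) : ℂ) by push_cast; ring,
        Complex.Gamma_ofReal]
    rw [h1, h2, Complex.Gamma_ofReal] at hGam
    have hGne' : ((Real.Gamma (a + b + 1) : ℝ) : ℂ) ≠ 0 := by exact_mod_cast hGpos.ne'
    rw [Complex.ofReal_div, eq_div_iff hGne', Complex.ofReal_mul]
    linear_combination -hGam
  rw [hL, hR, hbeta] at key
  rw [← Complex.ofReal_mul] at key
  have hfin : (∫ s in (0:ℝ)..t, (t - s) ^ (a - 1) * s ^ b)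
      = t ^ (a + b) * (Real.Gamma a * Real.Gamma (b + 1) / Real.Gamma (a + b + 1)) := by
    exact_mod_cast key
  rw [hfin]; ring

private lemma gamma_ratio {z a : ℝ} (ha : 0 < a) (hz : 2 ≤ z) :
    Real.Gamma z * (z - 1) ^ a ≤ Real.Gamma (z + a) := by
  have h1 : (0:ℝ) < z - 1 := by linarith
  have hz0 : (0:ℝ) < z := by linarith
  have hs := Real.convexOn_log_Gamma.slope_mono_adjacent
    (show z - 1 ∈ Set.Ioi (0:ℝ) by simpa using h1)
    (show z + a ∈ Set.Ioi (0:ℝ) by simp; linarith)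
    (show z - 1 < z by linarith) (show z < z + a by linarith)
  simp only [Function.comp] at hs
  have hd1 : z - (z - 1) = 1 := by ring
  have hd2 : z + a - z = a := by ring
  rw [hd1, hd2, div_one] at hs
  have hlog : Real.log (Real.Gamma z) - Real.log (Real.Gamma (z - 1)) = Real.log (z - 1) := by
    rw [show z = (z - 1) + 1 by ring, Real.Gamma_add_one h1.ne',
      Real.log_mul h1.ne' (Real.Gamma_pos_of_pos h1).ne']
    ring
  rw [hlog, le_div_iff₀ ha] at hs
  have hexp : Real.Gamma z * (z - 1) ^ a
      = Real.exp (Real.log (Real.Gamma z) + Real.log (z - 1) * a) := by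
    rw [Real.exp_add, Real.exp_log (Real.Gamma_pos_of_pos hz0),
      Real.rpow_def_of_pos h1]
  rw [hexp, ← Real.exp_log (Real.Gamma_pos_of_pos (show (0:ℝ) < z + a by linarith))]
  exact Real.exp_le_exp.2 (by linarith)

private lemma ml_summable {a : ℝ} (ha : 0 < a) {y : ℝ} (hy : 0 ≤ y) :
    Summable (fun j : ℕ => y ^ j / Real.Gamma ((j : ℝ) * a + 1)) := by
  rcases eq_or_lt_of_le hy with h0 | hy
  · refine summable_of_ne_finset_zero (s := {0}) fun j hj => ?_
    simp only [Finset.mem_singleton] at hj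
    simp [← h0, zero_pow hj]
  · obtain ⟨N, hN⟩ := exists_nat_ge (max (2 / a) ((2 * y) ^ a⁻¹ / a))
    refine summable_of_ratio_norm_eventually_le (r := 1/2) (by norm_num) ?_
    filter_upwards [Filter.eventually_ge_atTop N] with n hn
    have hnN : (N : ℝ) ≤ n := by exact_mod_cast hn
    have hna2 : 2 ≤ (n : ℝ) * a := by
      have := (le_max_left (2 / a) ((2 * y) ^ a⁻¹ / a)).trans (hN.trans hnN)
      calc (2:ℝ) = 2 / a * a := by field_simp
        _ ≤ (n : ℝ) * a := by exact mul_le_mul_of_nonneg_right this ha.le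
    have hna3 : (2 * y) ^ a⁻¹ ≤ (n : ℝ) * a := by
      have := (le_max_right (2 / a) ((2 * y) ^ a⁻¹ / a)).trans (hN.trans hnN)
      calc (2 * y) ^ a⁻¹ = (2 * y) ^ a⁻¹ / a * a := by field_simp
        _ ≤ (n : ℝ) * a := by exact mul_le_mul_of_nonneg_right this ha.le
    have h2y : 2 * y ≤ ((n : ℝ) * a) ^ a := by
      calc 2 * y = ((2 * y) ^ a⁻¹) ^ a := by
            rw [← Real.rpow_mul (by positivity : (0:ℝ) ≤ 2 * y), inv_mul_cancel₀ ha.ne',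
              Real.rpow_one]
        _ ≤ ((n : ℝ) * a) ^ a := Real.rpow_le_rpow (by positivity) hna3 ha.le
    set z := (n : ℝ) * a + 1 with hzdef
    have hz2 : 2 ≤ z := by simp only [hzdef]; linarith
    have hG : Real.Gamma z * (2 * y) ≤ Real.Gamma (z + a) := by
      have h := gamma_ratio ha hz2
      have : Real.Gamma z * (2 * y) ≤ Real.Gamma z * (z - 1) ^ a := by
        apply mul_le_mul_of_nonneg_left _ (Real.Gamma_pos_of_pos (by linarith)).le
        simpa [hzdef] using h2y
      linarith
    have hGz : 0 < Real.Gamma z := Real.Gamma_pos_of_pos (by linarith)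
    have hGza : 0 < Real.Gamma (z + a) := Real.Gamma_pos_of_pos (by linarith)
    have hcast : ((n + 1 : ℕ) : ℝ) * a + 1 = z + a := by push_cast; simp only [hzdef]; ring
    rw [hcast]
    rw [Real.norm_eq_abs, Real.norm_eq_abs, abs_of_nonneg (by positivity),
      abs_of_nonneg (by positivity),
      show (1/2 : ℝ) * (y ^ n / Real.Gamma z) = y ^ n / (2 * Real.Gamma z) by ring,
      div_le_div_iff₀ hGza (by positivity)]
    calc y ^ (n + 1) * (2 * Real.Gamma z) = y ^ n * (Real.Gamma z * (2 * y)) := by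
          rw [pow_succ]; ring
      _ ≤ y ^ n * Real.Gamma (z + a) := mul_le_mul_of_nonneg_left hG (by positivity)

private lemma kernel_integrable {a : ℝ} (ha : 0 < a) (t : ℝ) :
    IntervalIntegrable (fun s => (t - s) ^ (a - 1)) volume 0 t := by
  have h := (intervalIntegral.intervalIntegrable_rpow' (a := 0) (b := t)
    (show (-1 : ℝ) < a - 1 by linarith)).comp_sub_left t
  simpa using h.symm

private lemma kernel_mul_rpow_integrable {a b : ℝ} (ha : 0 < a) (hb : 0 ≤ b) (t : ℝ) :
    IntervalIntegrable (fun s => (t - s) ^ (a - 1) * s ^ b) volume 0 t :=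
  (kernel_integrable ha t).mul_continuousOn
    ((Real.continuous_rpow_const hb).continuousOn)

private lemma step_q {a M : ℝ} (ha : 0 < a) (hM : 0 < M) {t : ℝ} (ht : 0 < t) (j : ℕ) :
    M * ∫ s in (0:ℝ)..t, (t - s) ^ (a - 1) *
        ((Real.Gamma a * M) ^ j * s ^ ((j : ℝ) * a) / Real.Gamma ((j : ℝ) * a + 1)) =
      (Real.Gamma a * M) ^ (j + 1) * t ^ (((j : ℝ) + 1) * a) /
        Real.Gamma (((j : ℝ) + 1) * a + 1) := by
  set b : ℝ := (j : ℝ) * a with hbdef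
  have hb0 : (0:ℝ) ≤ b := by positivity
  have hG1 : 0 < Real.Gamma (b + 1) := Real.Gamma_pos_of_pos (by linarith)
  have hG2 : 0 < Real.Gamma (a + b + 1) := Real.Gamma_pos_of_pos (by linarith)
  have hGa : 0 < Real.Gamma a := Real.Gamma_pos_of_pos ha
  have hrw : (fun s => (t - s) ^ (a - 1) *
      ((Real.Gamma a * M) ^ j * s ^ b / Real.Gamma (b + 1)))
      = fun s => ((Real.Gamma a * M) ^ j / Real.Gamma (b + 1)) *
        ((t - s) ^ (a - 1) * s ^ b) := by
    funext s; ring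
  rw [hrw, intervalIntegral.integral_const_mul, beta_aux ha hb0 ht]
  have hexp : ((j : ℝ) + 1) * a = a + b := by rw [hbdef]; ring
  rw [hexp]
  rw [pow_succ]
  field_simp

private lemma q_integrable {a M : ℝ} (ha : 0 < a) (t : ℝ) (j : ℕ) :
    IntervalIntegrable (fun s => (t - s) ^ (a - 1) *
      ((Real.Gamma a * M) ^ j * s ^ ((j : ℝ) * a) / Real.Gamma ((j : ℝ) * a + 1)))
      volume 0 t := by
  have h := (kernel_mul_rpow_integrable ha (show (0:ℝ) ≤ (j : ℝ) * a by positivity) t).const_mul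
    ((Real.Gamma a * M) ^ j / Real.Gamma ((j : ℝ) * a + 1))
  have heq : (fun s => ((Real.Gamma a * M) ^ j / Real.Gamma ((j : ℝ) * a + 1)) *
      ((t - s) ^ (a - 1) * s ^ ((j : ℝ) * a)))
      = fun s => (t - s) ^ (a - 1) *
        ((Real.Gamma a * M) ^ j * s ^ ((j : ℝ) * a) / Real.Gamma ((j : ℝ) * a + 1)) := by
    funext s; ring
  exact heq ▸ h

/-- Fractional Gronwall inequality with Mittag-Leffler bound. -/
theorem stmt_8 (a M T : ℝ) (ha : 0 < a) (hM : 0 < M) (hT : 0 < T)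
    (g f : ℝ → ℝ)
    (hg_cont : ContinuousOn g (Set.Icc 0 T))
    (hg_nn : ∀ t ∈ Set.Icc (0:ℝ) T, 0 ≤ g t)
    (hf_nn : ∀ t ∈ Set.Icc (0:ℝ) T, 0 ≤ f t)
    (hf_mono : MonotoneOn f (Set.Icc 0 T))
    (hineq : ∀ t ∈ Set.Icc (0:ℝ) T,
      g t ≤ f t + M * ∫ s in (0:ℝ)..t, (t - s) ^ (a - 1) * g s) :
    ∀ t ∈ Set.Icc (0:ℝ) T,
      g t ≤ f t * ∑' j : ℕ,
        (Real.Gamma a * M * t ^ a) ^ j / Real.Gamma ((j : ℝ) * a + 1) := by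
  intro t₀ ht₀
  obtain ⟨ht₀0, ht₀T⟩ := ht₀
  have hGa : 0 < Real.Gamma a := Real.Gamma_pos_of_pos ha
  set K := Real.Gamma a * M with hKdef
  have hK0 : 0 < K := mul_pos hGa hM
  obtain ⟨x, hxmem, hxmax⟩ := (isCompact_Icc (a := (0:ℝ)) (b := T)).exists_isMaxOn
      ⟨0, by simp [hT.le]⟩ hg_cont
  set C := g x with hCdef
  have hC0 : 0 ≤ C := hg_nn x hxmem
  have hgC : ∀ s ∈ Set.Icc (0:ℝ) T, g s ≤ C := fun s hs => hxmax hs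
  rcases eq_or_lt_of_le ht₀0 with h0 | ht₀pos
  · subst h0
    have h1 := hineq 0 ⟨le_refl 0, hT.le⟩
    rw [intervalIntegral.integral_same] at h1
    have hs0 : (∑' j : ℕ, (K * (0:ℝ) ^ a) ^ j / Real.Gamma ((j : ℝ) * a + 1)) = 1 := by
      rw [Real.zero_rpow ha.ne', mul_zero]
      rw [tsum_eq_single 0 (fun j hj => by simp [zero_pow hj])]
      norm_num [Real.Gamma_one]
    rw [hs0, mul_one]
    simpa using h1
  · set F := f t₀ with hFdef
    have hF0 : 0 ≤ F := hf_nn t₀ ⟨ht₀0, ht₀T⟩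
    have main : ∀ n : ℕ, ∀ t ∈ Set.Ioc (0:ℝ) t₀,
        g t ≤ F * (∑ j ∈ Finset.range n,
            K ^ j * t ^ ((j : ℝ) * a) / Real.Gamma ((j : ℝ) * a + 1))
          + C * (K ^ n * t ^ ((n : ℝ) * a) / Real.Gamma ((n : ℝ) * a + 1)) := by
      intro n
      induction n with
      | zero =>
        intro t ht
        have hgt := hgC t ⟨ht.1.le, ht.2.trans ht₀T⟩
        simp only [Finset.range_zero, Finset.sum_empty, mul_zero, zero_add, Nat.cast_zero,
          zero_mul, Real.rpow_zero, pow_zero, Real.Gamma_one]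
        norm_num
        linarith
      | succ n ih =>
        intro t ht
        obtain ⟨ht0, htt₀⟩ := ht
        have htT : t ≤ T := htt₀.trans ht₀T
        have hI1 : IntervalIntegrable (fun s => (t - s) ^ (a - 1) * g s) volume 0 t :=
          (kernel_integrable ha t).mul_continuousOn
            (hg_cont.mono (by rw [Set.uIcc_of_le ht0.le]; exact Set.Icc_subset_Icc_right htT))
        set φ : ℝ → ℝ := fun s => F * (∑ j ∈ Finset.range n,
            K ^ j * s ^ ((j : ℝ) * a) / Real.Gamma ((j : ℝ) * a + 1))
          + C * (K ^ n * s ^ ((n : ℝ) * a) / Real.Gamma ((n : ℝ) * a + 1)) with hφdef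
        have hkq : ∀ j : ℕ, IntervalIntegrable (fun s => (t - s) ^ (a - 1) *
            (K ^ j * s ^ ((j : ℝ) * a) / Real.Gamma ((j : ℝ) * a + 1))) volume 0 t := fun j => by
          simpa [hKdef] using q_integrable (M := M) ha t j
        have hkφrw : (fun s => (t - s) ^ (a - 1) * φ s)
            = fun s => (∑ j ∈ Finset.range n, F * ((t - s) ^ (a - 1) *
                (K ^ j * s ^ ((j : ℝ) * a) / Real.Gamma ((j : ℝ) * a + 1))))
              + C * ((t - s) ^ (a - 1) *
                (K ^ n * s ^ ((n : ℝ) * a) / Real.Gamma ((n : ℝ) * a + 1))) := by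
          funext s
          simp only [hφdef, mul_add, Finset.mul_sum]
          congr 1
          · exact Finset.sum_congr rfl fun j _ => by ring
          · ring
        have hsumInt : IntervalIntegrable (fun s => ∑ j ∈ Finset.range n,
            F * ((t - s) ^ (a - 1) *
              (K ^ j * s ^ ((j : ℝ) * a) / Real.Gamma ((j : ℝ) * a + 1)))) volume 0 t := by
          have h := IntervalIntegrable.sum (μ := volume) (a := 0) (b := t) (Finset.range n)
            (f := fun j s => F * ((t - s) ^ (a - 1) *
              (K ^ j * s ^ ((j : ℝ) * a) / Real.Gamma ((j : ℝ) * a + 1))))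
            (fun j _ => (hkq j).const_mul F)
          simpa only [Finset.sum_fn] using h
        have hIφ : IntervalIntegrable (fun s => (t - s) ^ (a - 1) * φ s) volume 0 t := by
          rw [hkφrw]
          exact hsumInt.add ((hkq n).const_mul C)
        have hcomp : (∫ s in (0:ℝ)..t, (t - s) ^ (a - 1) * g s)
            ≤ ∫ s in (0:ℝ)..t, (t - s) ^ (a - 1) * φ s := by
          rw [intervalIntegral.integral_of_le ht0.le, intervalIntegral.integral_of_le ht0.le]
          refine setIntegral_mono_on hI1.1 hIφ.1 measurableSet_Ioc fun s hs => ?_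
          have hk0 : (0:ℝ) ≤ (t - s) ^ (a - 1) := Real.rpow_nonneg (by linarith [hs.2]) _
          exact mul_le_mul_of_nonneg_left (ih s ⟨hs.1, hs.2.trans htt₀⟩) hk0
        have hstep : ∀ j : ℕ, M * ∫ s in (0:ℝ)..t, (t - s) ^ (a - 1) *
            (K ^ j * s ^ ((j : ℝ) * a) / Real.Gamma ((j : ℝ) * a + 1))
            = K ^ (j + 1) * t ^ (((j : ℝ) + 1) * a) / Real.Gamma (((j : ℝ) + 1) * a + 1) :=
          fun j => by simpa [hKdef] using step_q ha hM ht0 j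
        have hval : M * ∫ s in (0:ℝ)..t, (t - s) ^ (a - 1) * φ s
            = F * (∑ j ∈ Finset.range n,
                K ^ (j + 1) * t ^ (((j : ℝ) + 1) * a) / Real.Gamma (((j : ℝ) + 1) * a + 1))
              + C * (K ^ (n + 1) * t ^ (((n : ℝ) + 1) * a) / Real.Gamma (((n : ℝ) + 1) * a + 1)) := by
          rw [hkφrw, intervalIntegral.integral_add hsumInt ((hkq n).const_mul C),
            intervalIntegral.integral_finset_sum (fun j _ => (hkq j).const_mul F)]
          simp only [intervalIntegral.integral_const_mul]
          simp only [← hstep]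
          rw [mul_add, Finset.mul_sum, Finset.mul_sum]
          congr 1
          · exact Finset.sum_congr rfl fun j _ => by ring
          · ring
        have h1 := hineq t ⟨ht0.le, htT⟩
        have h2 : f t ≤ F := hf_mono ⟨ht0.le, htT⟩ ⟨ht₀0, ht₀T⟩ htt₀
        have h3 : M * ∫ s in (0:ℝ)..t, (t - s) ^ (a - 1) * g s
            ≤ M * ∫ s in (0:ℝ)..t, (t - s) ^ (a - 1) * φ s :=
          mul_le_mul_of_nonneg_left hcomp hM.le
        have hsum : (∑ j ∈ Finset.range (n + 1),
              K ^ j * t ^ ((j : ℝ) * a) / Real.Gamma ((j : ℝ) * a + 1))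
            = (∑ j ∈ Finset.range n,
                K ^ (j + 1) * t ^ (((j : ℝ) + 1) * a) / Real.Gamma (((j : ℝ) + 1) * a + 1)) + 1 := by
          rw [Finset.sum_range_succ']
          congr 1
          · exact Finset.sum_congr rfl fun j _ => by push_cast; ring_nf
          · simp [Real.Gamma_one]
        calc g t ≤ f t + M * ∫ s in (0:ℝ)..t, (t - s) ^ (a - 1) * g s := h1
          _ ≤ F + M * ∫ s in (0:ℝ)..t, (t - s) ^ (a - 1) * φ s := add_le_add h2 h3
          _ = F * (∑ j ∈ Finset.range (n + 1),
                K ^ j * t ^ ((j : ℝ) * a) / Real.Gamma ((j : ℝ) * a + 1))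
              + C * (K ^ (n + 1) * t ^ ((((n + 1) : ℕ) : ℝ) * a) /
                Real.Gamma ((((n + 1) : ℕ) : ℝ) * a + 1)) := by
            rw [hval, hsum]
            push_cast
            ring
    have hy : (0:ℝ) ≤ K * t₀ ^ a := by positivity
    have hsummable : Summable (fun j : ℕ => (K * t₀ ^ a) ^ j / Real.Gamma ((j : ℝ) * a + 1)) :=
      ml_summable ha hy
    have hterm : ∀ j : ℕ, K ^ j * t₀ ^ ((j : ℝ) * a) / Real.Gamma ((j : ℝ) * a + 1)
        = (K * t₀ ^ a) ^ j / Real.Gamma ((j : ℝ) * a + 1) := by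
      intro j
      have hpow : t₀ ^ ((j : ℝ) * a) = (t₀ ^ a) ^ j := by
        rw [mul_comm (j : ℝ) a, Real.rpow_mul ht₀0, Real.rpow_natCast]
      rw [hpow, ← mul_pow]
    have hle : ∀ n : ℕ, g t₀ ≤ F * (∑' j : ℕ, (K * t₀ ^ a) ^ j / Real.Gamma ((j : ℝ) * a + 1))
        + C * ((K * t₀ ^ a) ^ n / Real.Gamma ((n : ℝ) * a + 1)) := by
      intro n
      have h := main n t₀ ⟨ht₀pos, le_refl t₀⟩
      refine h.trans (add_le_add ?_ (le_of_eq ?_))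
      · refine mul_le_mul_of_nonneg_left ?_ hF0
        rw [Finset.sum_congr rfl (fun j _ => hterm j)]
        exact hsummable.sum_le_tsum (Finset.range n) (fun j _ => by positivity)
      · rw [hterm n]
    have htendsto : Filter.Tendsto (fun n : ℕ =>
        F * (∑' j : ℕ, (K * t₀ ^ a) ^ j / Real.Gamma ((j : ℝ) * a + 1))
          + C * ((K * t₀ ^ a) ^ n / Real.Gamma ((n : ℝ) * a + 1)))
        Filter.atTop (nhds (F * (∑' j : ℕ, (K * t₀ ^ a) ^ j / Real.Gamma ((j : ℝ) * a + 1))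
          + C * 0)) :=
      Filter.Tendsto.add tendsto_const_nhds (hsummable.tendsto_atTop_zero.const_mul C)
    have hfinal := ge_of_tendsto' htendsto hle
    simpa using hfinal
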